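/- For the max-type kernel operator A restricted to the cone Z = C₊[0,a], one has ‖A‖_LIP = ‖A‖ = max{k(s,t) : (s,t) ∈ S}, where ‖A‖ = sup{‖Aφ‖_∞/‖φ‖_∞ : φ ∈ Z, φ ≠ 0} and ‖A‖_LIP = sup{‖Aφ − Aψ‖_∞/‖φ − ψ‖_∞ : φ, ψ ∈ Z, φ ≠ ψ}. -/
import Mathlib


/-- For the max-type kernel operator `A` restricted to the cone `Z = C₊[0,a]`,
`‖A‖_LIP = ‖A‖ = max {k(s,t) : (s,t) ∈ S}`, where
`‖A‖ = sup {‖Aφ‖_∞/‖φ‖_∞ : φ ∈ Z, φ ≠ 0}` and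
`‖A‖_LIP = sup {‖Aφ - Aψ‖_∞/‖φ - ψ‖_∞ : φ, ψ ∈ Z, φ ≠ ψ}`. -/
theorem maxKernelOperator_lipschitz_seminorm_eq_norm_eq_max_kernel
    {a : ℝ} (ha : 0 < a)
    (α β : C(Set.Icc (0:ℝ) a, Set.Icc (0:ℝ) a))
    (hαβ : ∀ s, α s ≤ β s)
    (S : Set (Set.Icc (0:ℝ) a × Set.Icc (0:ℝ) a))
    (hS : S = {p | p.2 ∈ Set.Icc (α p.1) (β p.1)})
    (k : Set.Icc (0:ℝ) a → Set.Icc (0:ℝ) a → ℝ)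
    (hk_cont : ContinuousOn (fun p : Set.Icc (0:ℝ) a × Set.Icc (0:ℝ) a => k p.1 p.2) S)
    (hk_nonneg : ∀ p ∈ S, 0 ≤ k p.1 p.2)
    -- the max-type kernel operator `A : C[0,a] → C[0,a]`
    (A : C(Set.Icc (0:ℝ) a, ℝ) → C(Set.Icc (0:ℝ) a, ℝ))
    (hA : ∀ φ s, IsGreatest ((fun t => k s t * φ t) '' Set.Icc (α s) (β s)) (A φ s)) :
    ∃ K : ℝ,
      -- `K = max {k(s,t) : (s,t) ∈ S}`
      IsGreatest ((fun p : Set.Icc (0:ℝ) a × Set.Icc (0:ℝ) a => k p.1 p.2) '' S) K ∧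
      -- `‖A‖_LIP = K`
      sSup {r : ℝ | ∃ φ ψ : C(Set.Icc (0:ℝ) a, ℝ), (∀ s, 0 ≤ φ s) ∧ (∀ s, 0 ≤ ψ s) ∧
        φ ≠ ψ ∧ r = ‖A φ - A ψ‖ / ‖φ - ψ‖} = K ∧
      -- `‖A‖ = K`
      sSup {r : ℝ | ∃ φ : C(Set.Icc (0:ℝ) a, ℝ), (∀ s, 0 ≤ φ s) ∧ φ ≠ 0 ∧
        r = ‖A φ‖ / ‖φ‖} = K := by
  haveI hXne : Nonempty (Set.Icc (0:ℝ) a) := ⟨⟨0, Set.left_mem_Icc.2 ha.le⟩⟩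
  -- S is closed, hence compact
  have hSclosed : IsClosed S := by
    rw [hS]
    have h1 : IsClosed {p : Set.Icc (0:ℝ) a × Set.Icc (0:ℝ) a | ((α p.1 : ℝ)) ≤ (p.2 : ℝ)} :=
      isClosed_le (continuous_subtype_val.comp (α.continuous.comp continuous_fst))
        (continuous_subtype_val.comp continuous_snd)
    have h2 : IsClosed {p : Set.Icc (0:ℝ) a × Set.Icc (0:ℝ) a | ((p.2 : ℝ)) ≤ (β p.1 : ℝ)} :=
      isClosed_le (continuous_subtype_val.comp continuous_snd)
        (continuous_subtype_val.comp (β.continuous.comp continuous_fst))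
    have : {p : Set.Icc (0:ℝ) a × Set.Icc (0:ℝ) a | p.2 ∈ Set.Icc (α p.1) (β p.1)}
        = {p | ((α p.1 : ℝ)) ≤ (p.2 : ℝ)} ∩ {p | ((p.2 : ℝ)) ≤ (β p.1 : ℝ)} := by
      ext p
      simp [Set.mem_Icc, ← Subtype.coe_le_coe]
    rw [this]
    exact h1.inter h2
  have hmemS : ∀ (s t : Set.Icc (0:ℝ) a), t ∈ Set.Icc (α s) (β s) → (s, t) ∈ S := by
    intro s t ht; rw [hS]; exact ht
  have hSne : S.Nonempty := by
    refine ⟨(⟨0, Set.left_mem_Icc.2 ha.le⟩, α ⟨0, Set.left_mem_Icc.2 ha.le⟩), ?_⟩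
    exact hmemS _ _ ⟨le_refl _, hαβ _⟩
  obtain ⟨p₀, hp₀S, hp₀max⟩ := hSclosed.isCompact.exists_isMaxOn hSne hk_cont
  set K := k p₀.1 p₀.2 with hKdef
  have hKgt : IsGreatest ((fun p : Set.Icc (0:ℝ) a × Set.Icc (0:ℝ) a => k p.1 p.2) '' S) K :=
    ⟨⟨p₀, hp₀S, rfl⟩, by rintro _ ⟨q, hq, rfl⟩; exact hp₀max hq⟩
  have hK0 : 0 ≤ K := hk_nonneg p₀ hp₀S
  have hkK : ∀ s t, t ∈ Set.Icc (α s) (β s) → k s t ≤ K := fun s t ht => hp₀max (hmemS s t ht)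
  -- key Lipschitz-type bound
  have hbound : ∀ φ ψ : C(Set.Icc (0:ℝ) a, ℝ), ∀ s, A φ s ≤ A ψ s + K * ‖φ - ψ‖ := by
    intro φ ψ s
    obtain ⟨t, ht, hteq⟩ := (hA φ s).1
    have hknn : 0 ≤ k s t := hk_nonneg _ (hmemS s t ht)
    have h1 : k s t * ψ t ≤ A ψ s := (hA ψ s).2 ⟨t, ht, rfl⟩
    have h2 : |φ t - ψ t| ≤ ‖φ - ψ‖ := by
      have := (φ - ψ).norm_coe_le_norm t
      simpa [Real.norm_eq_abs] using this
    calc A φ s = k s t * ψ t + k s t * (φ t - ψ t) := by rw [← hteq]; ring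
      _ ≤ A ψ s + K * ‖φ - ψ‖ := by
          refine add_le_add h1 ?_
          calc k s t * (φ t - ψ t) ≤ k s t * |φ t - ψ t| :=
                mul_le_mul_of_nonneg_left (le_abs_self _) hknn
            _ ≤ K * ‖φ - ψ‖ := mul_le_mul (hkK s t ht) h2 (abs_nonneg _) hK0
  have hAnn : ∀ φ : C(Set.Icc (0:ℝ) a, ℝ), (∀ s, 0 ≤ φ s) → ∀ s, 0 ≤ A φ s := by
    intro φ hφ s
    have h1 : k s (α s) * φ (α s) ≤ A φ s := (hA φ s).2 ⟨α s, ⟨le_refl _, hαβ s⟩, rfl⟩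
    have h2 : 0 ≤ k s (α s) := hk_nonneg _ (hmemS s (α s) ⟨le_refl _, hαβ s⟩)
    exact le_trans (mul_nonneg h2 (hφ _)) h1
  -- A 0 = 0
  have hA0 : A 0 = 0 := by
    ext s
    obtain ⟨t, _, hteq⟩ := (hA 0 s).1
    simp only [ContinuousMap.zero_apply] at hteq ⊢
    rw [← hteq]; ring
  -- A 1 has norm K
  have hA1le : ∀ s, A 1 s ≤ K := by
    intro s
    obtain ⟨t, ht, hteq⟩ := (hA 1 s).1
    simp only [ContinuousMap.one_apply, mul_one] at hteq
    rw [← hteq]; exact hkK s t ht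
  have hA1K : A 1 p₀.1 = K := by
    have hge : K ≤ A 1 p₀.1 := by
      have hp₀mem : p₀.2 ∈ Set.Icc (α p₀.1) (β p₀.1) := by rw [hS] at hp₀S; exact hp₀S
      have := (hA 1 p₀.1).2 ⟨p₀.2, hp₀mem, rfl⟩
      simpa using this
    exact le_antisymm (hA1le _) hge
  have hnormA1 : ‖A 1‖ = K := by
    refine le_antisymm (((A 1).norm_le hK0).2 ?_) ?_
    · intro s
      rw [Real.norm_eq_abs, abs_of_nonneg (hAnn 1 (fun _ => zero_le_one) s)]
      exact hA1le s
    · calc K = A 1 p₀.1 := hA1K.symm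
        _ ≤ |A 1 p₀.1| := le_abs_self _
        _ ≤ ‖A 1‖ := by simpa [Real.norm_eq_abs] using (A 1).norm_coe_le_norm p₀.1
  have hone_ne : (1 : C(Set.Icc (0:ℝ) a, ℝ)) ≠ 0 := by
    intro h
    obtain ⟨x⟩ := hXne
    have := ContinuousMap.congr_fun h x
    simp at this
  have hnorm_one : ‖(1 : C(Set.Icc (0:ℝ) a, ℝ))‖ = 1 := by
    refine le_antisymm (((1 : C(Set.Icc (0:ℝ) a, ℝ)).norm_le zero_le_one).2 (by simp)) ?_
    obtain ⟨x⟩ := hXne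
    simpa using (1 : C(Set.Icc (0:ℝ) a, ℝ)).norm_coe_le_norm x
  -- the Lipschitz bound on norms
  have hLip : ∀ φ ψ : C(Set.Icc (0:ℝ) a, ℝ), ‖A φ - A ψ‖ ≤ K * ‖φ - ψ‖ := by
    intro φ ψ
    refine ((A φ - A ψ).norm_le (by positivity)).2 ?_
    intro s
    rw [ContinuousMap.sub_apply, Real.norm_eq_abs, abs_sub_le_iff]
    constructor
    · have := hbound φ ψ s; linarith
    · have := hbound ψ φ s
      rw [norm_sub_rev] at this; linarith
  refine ⟨K, hKgt, ?_, ?_⟩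
  · -- Lipschitz seminorm
    refine IsGreatest.csSup_eq ⟨?_, ?_⟩
    · refine ⟨1, 0, fun _ => zero_le_one, fun _ => le_refl 0, hone_ne, ?_⟩
      rw [hA0, sub_zero, sub_zero, hnormA1, hnorm_one, div_one]
    · rintro r ⟨φ, ψ, hφ, hψ, hne, rfl⟩
      have hpos : (0:ℝ) < ‖φ - ψ‖ := by
        rw [norm_pos_iff]; exact sub_ne_zero.2 hne
      rw [div_le_iff₀ hpos]
      exact hLip φ ψ
  · -- operator norm
    refine IsGreatest.csSup_eq ⟨?_, ?_⟩
    · exact ⟨1, fun _ => zero_le_one, hone_ne, by rw [hnormA1, hnorm_one, div_one]⟩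
    · rintro r ⟨φ, hφ, hne, rfl⟩
      have hpos : (0:ℝ) < ‖φ‖ := norm_pos_iff.2 hne
      rw [div_le_iff₀ hpos]
      have := hLip φ 0
      rw [hA0, sub_zero, sub_zero] at this
      exact this
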